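/- In the quantum algebra U_q(sl_2), for every natural number i, the identity F^i E^i = ∏_{h=1}^{i} (Λ - q^{2h-1} K - q^{1-2h} K^{-1}) / (q - q^{-1})^2 holds, where Λ is the normalized Casimir element. -/

import Mathlib

/-- Auxiliary: the inductive skeleton. -/
lemma uq_aux {U : Type*} [Ring U] (Fg E : U) (C : ℕ → U)
    (hC0 : C 0 = Fg * E)
    (hFC : ∀ h, Fg * C h = C (h + 1) * Fg)
    (hcomm : ∀ h, Commute (C 0) (C h)) :
    ∀ i : ℕ, Fg ^ i * E ^ i = ((List.range i).map C).prod := by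
  have hshift : ∀ l : List ℕ,
      Fg * (l.map C).prod = ((l.map (· + 1)).map C).prod * Fg := by
    intro l
    induction l with
    | nil => simp
    | cons a t ih =>
      simp only [List.map_cons, List.prod_cons]
      rw [← mul_assoc, hFC a, mul_assoc, ih, ← mul_assoc]
  intro i
  induction i with
  | zero => simp
  | succ i ih =>
    have h1 : Fg ^ (i + 1) * E ^ (i + 1) = Fg * (Fg ^ i * E ^ i) * E := by
      rw [pow_succ', pow_succ]
      simp only [mul_assoc]
    rw [h1, ih, hshift, mul_assoc, ← hC0]
    have hc : Commute (C 0) ((((List.range i).map (· + 1)).map C)).prod := by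
      apply Commute.list_prod_right
      intro x hx
      obtain ⟨m, _, rfl⟩ := List.mem_map.mp hx
      exact hcomm m
    rw [← hc.eq]
    simp [List.range_succ_eq_map, List.map_map, Function.comp_def, Nat.succ_eq_add_one]


/-- In any algebra satisfying the defining relations of the quantum
algebra `U_q(sl₂)`, for every natural number `i` one has
`F^i E^i = ∏_{h=1}^{i} (Λ - q^{2h-1} K - q^{1-2h} K⁻¹)/(q-q⁻¹)²`,
where `Λ = (q-q⁻¹)² FE + q K + q⁻¹ K⁻¹` is the normalized Casimir element. -/
theorem uq_pow_F_pow_E (F : Type*) [Field F] (q : F) (hq0 : q ≠ 0) (hq4 : q ^ 4 ≠ 1)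
    (U : Type*) [Ring U] [Algebra F U] (E K Kinv Fg : U)
    (hKKinv : K * Kinv = 1) (hKinvK : Kinv * K = 1)
    (hKE : K * E = q ^ 2 • (E * K))
    (hKF : K * Fg = (q ^ 2)⁻¹ • (Fg * K))
    (hEF : E * Fg - Fg * E = (q - q⁻¹)⁻¹ • (K - Kinv))
    (Lam : U) (hLam : Lam = (q - q⁻¹) ^ 2 • (Fg * E) + q • K + q⁻¹ • Kinv) :
    ∀ i : ℕ,
      Fg ^ i * E ^ i =
        ((List.range i).map (fun h : ℕ =>
          ((q - q⁻¹) ^ 2)⁻¹ •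
            (Lam - q ^ (2 * ((h : ℤ) + 1) - 1) • K
                 - q ^ (1 - 2 * ((h : ℤ) + 1)) • Kinv))).prod := by

  have hq2 : (q ^ 2 : F) ≠ 0 := pow_ne_zero _ hq0
  have hq21 : q ^ 2 ≠ 1 := by
    intro h
    exact hq4 (by rw [show (4:ℕ) = 2*2 by norm_num, pow_mul, h, one_pow])
  have hs : q - q⁻¹ ≠ 0 := by
    intro h
    have hqq : q = q⁻¹ := sub_eq_zero.mp h
    apply hq21
    calc q ^ 2 = q * q := sq q
      _ = q * q⁻¹ := by nth_rewrite 2 [hqq]; rfl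
      _ = 1 := mul_inv_cancel₀ hq0
  have hs2 : ((q - q⁻¹) ^ 2 : F) ≠ 0 := pow_ne_zero _ hs
  have hqq1 : (q * q - 1 : F) ≠ 0 := by
    rw [← sq]; exact sub_ne_zero.mpr hq21
  have hden : (-q ^ 2 + q ^ 4 : F) ≠ 0 := by
    have h1 : (q ^ 2 - 1 : F) ≠ 0 := sub_ne_zero.mpr hq21
    have : (-q ^ 2 + q ^ 4 : F) = q ^ 2 * (q ^ 2 - 1) := by ring
    rw [this]
    exact mul_ne_zero hq2 h1
  -- directed rewrite rules
  have hFK : Fg * K = q ^ 2 • (K * Fg) := by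
    rw [hKF, smul_smul, mul_inv_cancel₀ hq2, one_smul]
  have hEK : E * K = (q ^ 2)⁻¹ • (K * E) := by
    rw [hKE, smul_smul, inv_mul_cancel₀ hq2, one_smul]
  have hKinvF : Kinv * Fg = q ^ 2 • (Fg * Kinv) := by
    calc Kinv * Fg = Kinv * (Fg * K) * Kinv := by
          rw [mul_assoc, mul_assoc, hKKinv, mul_one]
      _ = q ^ 2 • (Fg * Kinv) := by
          rw [hFK, mul_smul_comm, smul_mul_assoc, ← mul_assoc, hKinvK, one_mul]
  have hKinvE : Kinv * E = (q ^ 2)⁻¹ • (E * Kinv) := by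
    calc Kinv * E = Kinv * (E * K) * Kinv := by
          rw [mul_assoc, mul_assoc, hKKinv, mul_one]
      _ = (q ^ 2)⁻¹ • (E * Kinv) := by
          rw [hEK, mul_smul_comm, smul_mul_assoc, ← mul_assoc, hKinvK, one_mul]
  have hEFg : E * Fg = Fg * E + (q - q⁻¹)⁻¹ • K - (q - q⁻¹)⁻¹ • Kinv := by
    have h := hEF
    rw [sub_eq_iff_eq_add] at h
    rw [h, smul_sub]
    abel
  -- applied versions (push generators rightwards in right-associated products)
  have hKE' : ∀ x : U, K * (E * x) = q ^ 2 • (E * (K * x)) := fun x => by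
    rw [← mul_assoc, hKE, smul_mul_assoc, mul_assoc]
  have hKF' : ∀ x : U, K * (Fg * x) = (q ^ 2)⁻¹ • (Fg * (K * x)) := fun x => by
    rw [← mul_assoc, hKF, smul_mul_assoc, mul_assoc]
  have hKinvE' : ∀ x : U, Kinv * (E * x) = (q ^ 2)⁻¹ • (E * (Kinv * x)) := fun x => by
    rw [← mul_assoc, hKinvE, smul_mul_assoc, mul_assoc]
  have hKinvF' : ∀ x : U, Kinv * (Fg * x) = q ^ 2 • (Fg * (Kinv * x)) := fun x => by
    rw [← mul_assoc, hKinvF, smul_mul_assoc, mul_assoc]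
  have hEFg' : ∀ x : U, E * (Fg * x)
      = Fg * (E * x) + (q - q⁻¹)⁻¹ • (K * x) - (q - q⁻¹)⁻¹ • (Kinv * x) := fun x => by
    rw [← mul_assoc, hEFg, sub_mul, add_mul, smul_mul_assoc, smul_mul_assoc, mul_assoc]
  -- commutation facts
  have hKFE : Commute (Fg * E) K := by
    show (Fg * E) * K = K * (Fg * E)
    simp only [mul_assoc, hKF', hKE, mul_smul_comm, smul_smul]
    match_scalars <;> field_simp
  have hKinvFE : Commute (Fg * E) Kinv := by
    show (Fg * E) * Kinv = Kinv * (Fg * E)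
    simp only [mul_assoc, hKinvF', hKinvE, mul_smul_comm, smul_smul]
    match_scalars <;> field_simp
  have hLamFE : Commute (Fg * E) Lam := by
    show (Fg * E) * Lam = Lam * (Fg * E)
    rw [hLam]
    simp only [mul_add, add_mul, mul_sub, sub_mul, smul_mul_assoc, mul_smul_comm,
      smul_smul, smul_sub, smul_add, mul_assoc, hKF', hKinvF', hKE', hKinvE',
      hKE, hKinvE, hEFg, hEFg']
    match_scalars <;> field_simp <;> ring
  have hLamF : Lam * Fg = Fg * Lam := by
    rw [hLam]
    simp only [mul_add, add_mul, mul_sub, sub_mul, smul_mul_assoc, mul_smul_comm,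
      smul_smul, smul_sub, smul_add, mul_assoc, hKF, hKinvF, hKF', hKinvF',
      hEFg, hEFg']
    match_scalars
    all_goals field_simp
    all_goals try field_simp [mul_ne_zero hq2 hqq1]
    all_goals try ring
    all_goals try (left; ring)
  have hC0 : ((q - q⁻¹) ^ 2)⁻¹ •
        (Lam - q ^ (2 * (((0:ℕ) : ℤ) + 1) - 1) • K
             - q ^ (1 - 2 * (((0:ℕ) : ℤ) + 1)) • Kinv) = Fg * E := by
    rw [hLam]
    norm_num
    rw [show ((q - q⁻¹) ^ 2 • (Fg * E) + q • K + q⁻¹ • Kinv) - q • K - q⁻¹ • Kinv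
        = (q - q⁻¹) ^ 2 • (Fg * E) from by abel, smul_smul, inv_mul_cancel₀ hs2, one_smul]
  -- apply the skeleton
  refine uq_aux Fg E (fun h : ℕ =>
      ((q - q⁻¹) ^ 2)⁻¹ •
        (Lam - q ^ (2 * ((h : ℤ) + 1) - 1) • K
             - q ^ (1 - 2 * ((h : ℤ) + 1)) • Kinv)) hC0 ?_ ?_
  · intro h
    simp only [mul_sub, sub_mul, mul_smul_comm, smul_mul_assoc, smul_smul, hLamF,
      hKF, hKinvF]
    match_scalars
    · ring
    · rw [show 2 * ((h:ℤ) + 1 + 1) - 1 = (2 * ((h:ℤ) + 1) - 1) + 2 by ring,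
        zpow_add₀ hq0, show (q:F) ^ (2:ℤ) = q ^ 2 from by norm_cast]
      try field_simp
      try ring
    · rw [show 1 - 2 * ((h:ℤ) + 1) = (1 - 2 * ((h:ℤ) + 1 + 1)) + 2 by ring,
        zpow_add₀ hq0, show (q:F) ^ (2:ℤ) = q ^ 2 from by norm_cast]
      try field_simp
      try ring
  · intro h
    simp only [hC0]
    exact Commute.smul_right
      ((hLamFE.sub_right (hKFE.smul_right _)).sub_right (hKinvFE.smul_right _)) _
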